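/- Shedding lemma (injection): Let T be a rooted tree with parent function p, let x be a non-root internal node, and let y be a leaf that is a proper descendant of a sibling of x. Let T' be obtained by reassigning every child of x to have parent y (other parents unchanged). Define f(S') = S' if S' meets the root-to-y path in T, and f(S') = (S' \ {x}) ∪ {y} otherwise. Then f maps transversals of T' of size k injectively to transversals of T of size k; consequently c(T,k) ≥ c(T',k) for all k. -/

import Mathlib

open Finset

/-- A rooted tree on node set `Fin n`, given by a parent function.
The root is its own parent, and iterating the parent function from any
node eventually reaches the root. -/
structure RTree (n : ℕ) where
  root : Fin n
  parent : Fin n → Fin n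
  parent_root : parent root = root
  reaches_root : ∀ v, ∃ k, parent^[k] v = root

namespace RTree

variable {n : ℕ}

/-- `y` is an ancestor of `v` (possibly `y = v`): `y` lies on the
root-to-`v` path. -/
def Ancestor (T : RTree n) (y v : Fin n) : Prop :=
  ∃ k, T.parent^[k] v = y

/-- `u` is a child of `v`. -/
def IsChild (T : RTree n) (u v : Fin n) : Prop :=
  u ≠ T.root ∧ T.parent u = v

/-- A node is internal if it has at least one child. -/
def IsInternal (T : RTree n) (v : Fin n) : Prop :=
  ∃ u, T.IsChild u v

/-- A leaf is a node with no children. -/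
def IsLeaf (T : RTree n) (v : Fin n) : Prop :=
  ¬ T.IsInternal v

open scoped Classical in
noncomputable def children (T : RTree n) (v : Fin n) : Finset (Fin n) :=
  Finset.univ.filter (fun u => T.IsChild u v)

open scoped Classical in
noncomputable def leaves (T : RTree n) : Finset (Fin n) :=
  Finset.univ.filter (fun v => T.IsLeaf v)

/-- A transversal is a set of nodes meeting every root-to-leaf path. -/
def IsTransversal (T : RTree n) (S : Finset (Fin n)) : Prop :=
  ∀ ℓ, T.IsLeaf ℓ → ∃ v ∈ S, T.Ancestor v ℓ

open scoped Classical in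
/-- `c T k` is the number of transversals of size `k` in `T`. -/
noncomputable def c (T : RTree n) (k : ℕ) : ℕ :=
  ((Finset.univ.powersetCard k).filter (fun S => T.IsTransversal S)).card

/-- A caterpillar: the internal nodes form a chain under the ancestor
relation (equivalently, removing all leaves yields a rooted tree with
precisely one leaf). -/
def IsCaterpillar (T : RTree n) : Prop :=
  ∀ v w, T.IsInternal v → T.IsInternal w → T.Ancestor v w ∨ T.Ancestor w v

/-- A full caterpillar of degree `d`: a caterpillar in which every internal
node, except possibly the lowest one, has precisely `d` children (and no node
has more than `d` children). -/
def IsFullCaterpillar (T : RTree n) (d : ℕ) : Prop :=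
  T.IsCaterpillar ∧ (∀ v, (T.children v).card ≤ d) ∧
    ∀ v, (∃ w, T.IsInternal w ∧ T.IsChild w v) → (T.children v).card = d

/-- Isomorphism of rooted trees on `Fin n`. -/
def Isomorphic (T T' : RTree n) : Prop :=
  ∃ e : Fin n ≃ Fin n, e T.root = T'.root ∧ ∀ v, e (T.parent v) = T'.parent (e v)

end RTree

open RTree

/-- Iterating the parent fixes the root. -/
lemma RTree.iterate_root_aux {n : ℕ} (T : RTree n) (k : ℕ) :
    T.parent^[k] T.root = T.root :=
  Function.iterate_fixed T.parent_root k

/-- If a node lies on a nontrivial cycle of the parent map, it is the root. -/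
lemma RTree.eq_root_of_cycle_aux {n : ℕ} (T : RTree n) {v : Fin n} {m : ℕ}
    (hm : 1 ≤ m) (h : T.parent^[m] v = v) : v = T.root := by
  obtain ⟨k, hk⟩ := T.reaches_root v
  have hmk : ∀ j, T.parent^[m * j] v = v := by
    intro j
    induction j with
    | zero => simp
    | succ j ih => rw [Nat.mul_succ, Function.iterate_add_apply, h, ih]
  have h1 : T.parent^[m * k] v = v := hmk k
  have h2 : m * k = (m * k - k) + k := by
    have := Nat.le_mul_of_pos_left k hm
    omega
  rw [h2, Function.iterate_add_apply, hk, RTree.iterate_root_aux] at h1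
  exact h1.symm

lemma RTree.anc_trans_aux {n : ℕ} (T : RTree n) {u v w : Fin n}
    (h1 : T.Ancestor v w) (h2 : T.Ancestor u v) : T.Ancestor u w := by
  obtain ⟨k, hk⟩ := h1
  obtain ⟨i, hi⟩ := h2
  exact ⟨i + k, by rw [Function.iterate_add_apply, hk, hi]⟩

lemma RTree.anc_antisymm_aux {n : ℕ} (T : RTree n) {a b : Fin n}
    (h1 : T.Ancestor a b) (h2 : T.Ancestor b a) : a = b := by
  obtain ⟨k, hk⟩ := h1
  obtain ⟨i, hi⟩ := h2
  rcases Nat.eq_zero_or_pos (k + i) with h | h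
  · have hk0 : k = 0 := by omega
    rw [hk0] at hk
    exact hk.symm
  · have hcyc : T.parent^[k + i] a = a := by
      rw [Function.iterate_add_apply, hi, hk]
    have ha : a = T.root := T.eq_root_of_cycle_aux h hcyc
    have hb : b = T.root := by
      rw [← hi, ha, RTree.iterate_root_aux]
    rw [ha, hb]

open scoped Classical in
theorem stmt9 (n : ℕ) (T T' : RTree n) (x y s : Fin n)
    (hx : x ≠ T.root) (hxint : T.IsInternal x)
    (hy : T.IsLeaf y)
    (hs : s ≠ x) (hsroot : s ≠ T.root) (hsib : T.parent s = T.parent x)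
    (hdesc : T.Ancestor s y) (hproper : s ≠ y)
    (hroot : T'.root = T.root)
    (hpar : ∀ z, T'.parent z = if T.parent z = x then y else T.parent z) :
    (∀ S' : Finset (Fin n), T'.IsTransversal S' →
        T.IsTransversal
          (if ∃ v ∈ S', T.Ancestor v y then S' else insert y (S'.erase x)) ∧
        (if ∃ v ∈ S', T.Ancestor v y then S' else insert y (S'.erase x)).card
          = S'.card) ∧
    (∀ S₁ S₂ : Finset (Fin n), T'.IsTransversal S₁ → T'.IsTransversal S₂ →
        (if ∃ v ∈ S₁, T.Ancestor v y then S₁ else insert y (S₁.erase x)) =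
          (if ∃ v ∈ S₂, T.Ancestor v y then S₂ else insert y (S₂.erase x)) →
        S₁ = S₂) ∧
    ∀ k, T'.c k ≤ T.c k := by
  classical
  have hyx : y ≠ x := fun h => hy (by rw [h]; exact hxint)
  obtain ⟨j, hj⟩ := hdesc
  have hyroot : y ≠ T.root := by
    intro h
    rw [h, RTree.iterate_root_aux] at hj
    exact hsroot hj.symm
  have hpxj : T.parent^[j + 1] y = T.parent x := by
    rw [Function.iterate_succ_apply', hj, hsib]
  -- no iterate of x equals y
  have hxmy : ∀ m, T.parent^[m] x ≠ y := by
    intro m hm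
    rcases Nat.eq_zero_or_pos m with h0 | h0
    · rw [h0] at hm
      exact hyx hm.symm
    · have e1 : T.parent^[(m - 1) + (j + 1)] y = y := by
        rw [Function.iterate_add_apply, hpxj, ← Function.iterate_succ_apply,
          show (m - 1).succ = m by omega]
        exact hm
      exact hyroot (T.eq_root_of_cycle_aux (by omega) e1)
  -- x is not an ancestor of y
  have hxany : ∀ k, T.parent^[k] y ≠ x := by
    intro k hk
    rcases le_or_gt k j with h | h
    · have h1 : T.parent^[j - k] x = s := by
        rw [← hk, ← Function.iterate_add_apply, show j - k + k = j by omega]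
        exact hj
      rcases Nat.eq_zero_or_pos (j - k) with h0 | h0
      · rw [h0] at h1
        exact hs h1.symm
      · have h2 : T.parent^[j - k] s = s := by
          calc T.parent^[j - k] s
              = T.parent^[(j - k - 1) + 1] s := by rw [show j - k - 1 + 1 = j - k by omega]
            _ = T.parent^[j - k - 1] (T.parent s) := Function.iterate_succ_apply _ _ _
            _ = T.parent^[j - k - 1] (T.parent x) := by rw [hsib]
            _ = T.parent^[(j - k - 1) + 1] x := (Function.iterate_succ_apply _ _ _).symm
            _ = T.parent^[j - k] x := by rw [show j - k - 1 + 1 = j - k by omega]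
            _ = s := h1
        exact hsroot (T.eq_root_of_cycle_aux h0 h2)
    · have h1 : T.parent^[k - j] s = x := by
        rw [← hj, ← Function.iterate_add_apply, show k - j + j = k by omega]
        exact hk
      have h2 : T.parent^[k - j] x = x := by
        calc T.parent^[k - j] x
            = T.parent^[(k - j - 1) + 1] x := by rw [show k - j - 1 + 1 = k - j by omega]
          _ = T.parent^[k - j - 1] (T.parent x) := Function.iterate_succ_apply _ _ _
          _ = T.parent^[k - j - 1] (T.parent s) := by rw [hsib]
          _ = T.parent^[(k - j - 1) + 1] s := (Function.iterate_succ_apply _ _ _).symm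
          _ = T.parent^[k - j] s := by rw [show k - j - 1 + 1 = k - j by omega]
          _ = x := h1
      exact hx (T.eq_root_of_cycle_aux (by omega) h2)
  have hxm : ∀ m, 1 ≤ m → T.parent^[m] x ≠ x :=
    fun m hm h => hx (T.eq_root_of_cycle_aux hm h)
  -- path transfer lemma
  have pathfix : ∀ w : Fin n, (∀ m, 1 ≤ m → T.parent^[m] w ≠ x) →
      ∀ k, T'.parent^[k] w = T.parent^[k] w := by
    intro w hw k
    induction k with
    | zero => rfl
    | succ k ih =>
      have hne : T.parent (T.parent^[k] w) ≠ x := by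
        intro h
        exact hw (k + 1) (by omega) (by rw [Function.iterate_succ_apply']; exact h)
      rw [Function.iterate_succ_apply', Function.iterate_succ_apply', ih, hpar, if_neg hne]
  have hyfix : ∀ k, T'.parent^[k] y = T.parent^[k] y :=
    pathfix y (fun m _ h => hxany m h)
  have hxfix : ∀ k, T'.parent^[k] x = T.parent^[k] x :=
    pathfix x (fun m hm h => hxm m hm h)
  -- x is a leaf of T'
  have hxleaf' : T'.IsLeaf x := by
    rintro ⟨u, _, hu2⟩
    rw [hpar] at hu2
    split_ifs at hu2 with h
    · exact hyx hu2
    · exact h hu2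
  -- leaves of T other than y are leaves of T'
  have hleaf' : ∀ ℓ, T.IsLeaf ℓ → ℓ ≠ y → T'.IsLeaf ℓ := by
    intro ℓ hℓ hℓy hint
    obtain ⟨u, hu1, hu2⟩ := hint
    rw [hpar] at hu2
    split_ifs at hu2 with h
    · exact hℓy hu2.symm
    · exact hℓ ⟨u, by rwa [hroot] at hu1, hu2⟩
  -- key facts in the "else" case
  have hBkey : ∀ S' : Finset (Fin n), T'.IsTransversal S' →
      (¬ ∃ v ∈ S', T.Ancestor v y) → x ∈ S' ∧ y ∉ S' := by
    intro S' htr hno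
    constructor
    · obtain ⟨w, hwS, m, hm⟩ := htr x hxleaf'
      rw [hxfix] at hm
      rcases Nat.eq_zero_or_pos m with h0 | h0
      · rw [h0] at hm
        rwa [← hm] at hwS
      · exfalso
        apply hno
        refine ⟨w, hwS, ⟨(m - 1) + (j + 1), ?_⟩⟩
        rw [Function.iterate_add_apply, hpxj, ← Function.iterate_succ_apply,
          show (m - 1).succ = m by omega]
        exact hm
    · intro hyS
      exact hno ⟨y, hyS, ⟨0, rfl⟩⟩
  -- decomposition of T'-ancestors of a node below x
  have hdecomp : ∀ ℓ : Fin n, ℓ ≠ x → T.Ancestor x ℓ → ∀ v, T'.Ancestor v ℓ →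
      (T.Ancestor v ℓ ∧ v ≠ x) ∨ T.Ancestor v y := by
    intro ℓ hℓx hancx v hv
    have hex : ∃ k, T.parent^[k] ℓ = x := hancx
    set K := Nat.find hex with hKdef
    have hKspec : T.parent^[K] ℓ = x := Nat.find_spec hex
    have hKmin : ∀ m, m < K → T.parent^[m] ℓ ≠ x := fun m hm => Nat.find_min hex hm
    have hK1 : 1 ≤ K := by
      rcases Nat.eq_zero_or_pos K with h0 | h0
      · rw [h0] at hKspec
        exact absurd hKspec hℓx
      · exact h0
    have hlow : ∀ m, m < K → T'.parent^[m] ℓ = T.parent^[m] ℓ := by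
      intro m
      induction m with
      | zero => intro _; rfl
      | succ m ih =>
        intro hm
        have ihm := ih (by omega)
        have hne : T.parent (T.parent^[m] ℓ) ≠ x := by
          intro h
          exact hKmin (m + 1) hm (by rw [Function.iterate_succ_apply']; exact h)
        rw [Function.iterate_succ_apply', Function.iterate_succ_apply', ihm, hpar, if_neg hne]
    have hKy : T'.parent^[K] ℓ = y := by
      have h1 : T'.parent^[K] ℓ = T'.parent (T'.parent^[K - 1] ℓ) := by
        conv_lhs => rw [show K = K - 1 + 1 by omega]
        rw [Function.iterate_succ_apply']
      have h2 : T.parent (T.parent^[K - 1] ℓ) = x := by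
        have h3 : T.parent^[(K - 1) + 1] ℓ = x := by
          rw [show K - 1 + 1 = K by omega]
          exact hKspec
        rwa [Function.iterate_succ_apply'] at h3
      rw [h1, hlow (K - 1) (by omega), hpar, if_pos h2]
    have hhigh : ∀ m, T'.parent^[K + m] ℓ = T.parent^[m] y := by
      intro m
      rw [Nat.add_comm, Function.iterate_add_apply, hKy, hyfix]
    obtain ⟨m, hm⟩ := hv
    rcases lt_or_ge m K with h | h
    · left
      rw [hlow m h] at hm
      exact ⟨⟨m, hm⟩, fun hvx => hKmin m h (by rw [hm, hvx])⟩
    · right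
      have h1 : T'.parent^[K + (m - K)] ℓ = v := by
        rw [show K + (m - K) = m by omega]
        exact hm
      rw [hhigh] at h1
      exact ⟨m - K, h1⟩
  -- Part 1
  have main1 : ∀ S' : Finset (Fin n), T'.IsTransversal S' →
      T.IsTransversal
        (if ∃ v ∈ S', T.Ancestor v y then S' else insert y (S'.erase x)) ∧
      (if ∃ v ∈ S', T.Ancestor v y then S' else insert y (S'.erase x)).card
        = S'.card := by
    intro S' htr
    by_cases hc : ∃ v ∈ S', T.Ancestor v y
    · rw [if_pos hc]
      refine ⟨?_, rfl⟩
      intro ℓ hℓ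
      by_cases hly : ℓ = y
      · rw [hly]; exact hc
      · by_cases hxl : T.Ancestor x ℓ
        · obtain ⟨w, hwS, m, hm⟩ := htr x hxleaf'
          rw [hxfix] at hm
          exact ⟨w, hwS, T.anc_trans_aux hxl ⟨m, hm⟩⟩
        · have hfix := pathfix ℓ (fun m _ h => hxl ⟨m, h⟩)
          obtain ⟨v, hvS, m, hm⟩ := htr ℓ (hleaf' ℓ hℓ hly)
          rw [hfix] at hm
          exact ⟨v, hvS, ⟨m, hm⟩⟩
    · rw [if_neg hc]
      obtain ⟨hxS, hyS⟩ := hBkey S' htr hc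
      constructor
      · intro ℓ hℓ
        by_cases hly : ℓ = y
        · exact ⟨y, Finset.mem_insert_self _ _, ⟨0, hly⟩⟩
        · have hℓx : ℓ ≠ x := fun h => hℓ (by rw [h]; exact hxint)
          by_cases hxl : T.Ancestor x ℓ
          · obtain ⟨v, hvS, hv⟩ := htr ℓ (hleaf' ℓ hℓ hly)
            rcases hdecomp ℓ hℓx hxl v hv with ⟨hanc, hvx⟩ | hancy
            · exact ⟨v, Finset.mem_insert_of_mem (Finset.mem_erase.mpr ⟨hvx, hvS⟩), hanc⟩
            · exact absurd ⟨v, hvS, hancy⟩ hc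
          · have hfix := pathfix ℓ (fun m _ h => hxl ⟨m, h⟩)
            obtain ⟨v, hvS, m, hm⟩ := htr ℓ (hleaf' ℓ hℓ hly)
            rw [hfix] at hm
            have hvx : v ≠ x := fun h => hxl ⟨m, by rw [hm, h]⟩
            exact ⟨v, Finset.mem_insert_of_mem (Finset.mem_erase.mpr ⟨hvx, hvS⟩), ⟨m, hm⟩⟩
      · rw [Finset.card_insert_of_notMem (fun h => hyS (Finset.mem_of_mem_erase h)),
          Finset.card_erase_of_mem hxS]
        have : 0 < S'.card := Finset.card_pos.mpr ⟨x, hxS⟩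
        omega
  -- mixed case impossibility for injectivity
  have mixed : ∀ S₁ S₂ : Finset (Fin n), T'.IsTransversal S₁ →
      (∃ v ∈ S₁, T.Ancestor v y) → (¬ ∃ v ∈ S₂, T.Ancestor v y) →
      S₁ = insert y (S₂.erase x) → False := by
    intro S₁ S₂ ht1 h1 h2 heq
    have hxS1 : x ∉ S₁ := by
      rw [heq]
      intro h
      rcases Finset.mem_insert.mp h with h | h
      · exact hyx h.symm
      · exact (Finset.mem_erase.mp h).1 rfl
    obtain ⟨w, hwS, m, hm⟩ := ht1 x hxleaf'
    rw [hxfix] at hm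
    have hm1 : 1 ≤ m := by
      rcases Nat.eq_zero_or_pos m with h0 | h0
      · exfalso
        apply hxS1
        rw [h0] at hm
        rwa [← hm] at hwS
      · exact h0
    have hwy : T.Ancestor w y := by
      refine ⟨(m - 1) + (j + 1), ?_⟩
      rw [Function.iterate_add_apply, hpxj, ← Function.iterate_succ_apply,
        show (m - 1).succ = m by omega]
      exact hm
    have hwny : w ≠ y := fun h => hxmy m (h ▸ hm)
    have hwS2 : w ∈ S₂ := by
      rw [heq] at hwS
      rcases Finset.mem_insert.mp hwS with h | h
      · exact absurd h hwny
      · exact Finset.mem_of_mem_erase h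
    exact h2 ⟨w, hwS2, hwy⟩
  -- Part 2
  have main2 : ∀ S₁ S₂ : Finset (Fin n), T'.IsTransversal S₁ → T'.IsTransversal S₂ →
      (if ∃ v ∈ S₁, T.Ancestor v y then S₁ else insert y (S₁.erase x)) =
        (if ∃ v ∈ S₂, T.Ancestor v y then S₂ else insert y (S₂.erase x)) →
      S₁ = S₂ := by
    intro S₁ S₂ ht1 ht2 heq
    by_cases h1 : ∃ v ∈ S₁, T.Ancestor v y <;>
      by_cases h2 : ∃ v ∈ S₂, T.Ancestor v y
    · rwa [if_pos h1, if_pos h2] at heq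
    · rw [if_pos h1, if_neg h2] at heq
      exact absurd (mixed S₁ S₂ ht1 h1 h2 heq) not_false
    · rw [if_neg h1, if_pos h2] at heq
      exact absurd (mixed S₂ S₁ ht2 h2 h1 heq.symm) not_false
    · rw [if_neg h1, if_neg h2] at heq
      obtain ⟨hx1, hy1⟩ := hBkey S₁ ht1 h1
      obtain ⟨hx2, hy2⟩ := hBkey S₂ ht2 h2
      ext z
      by_cases hz : z = x
      · rw [hz]; simp [hx1, hx2]
      · by_cases hzy : z = y
        · rw [hzy]; simp [hy1, hy2]
        · constructor <;> intro hzS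
          · have h3 : z ∈ insert y (S₁.erase x) :=
              Finset.mem_insert_of_mem (Finset.mem_erase.mpr ⟨hz, hzS⟩)
            rw [heq] at h3
            rcases Finset.mem_insert.mp h3 with h | h
            · exact absurd h hzy
            · exact Finset.mem_of_mem_erase h
          · have h3 : z ∈ insert y (S₂.erase x) :=
              Finset.mem_insert_of_mem (Finset.mem_erase.mpr ⟨hz, hzS⟩)
            rw [← heq] at h3
            rcases Finset.mem_insert.mp h3 with h | h
            · exact absurd h hzy
            · exact Finset.mem_of_mem_erase h
  refine ⟨main1, main2, ?_⟩
  intro k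
  unfold RTree.c
  apply Finset.card_le_card_of_injOn
      (fun S' => if ∃ v ∈ S', T.Ancestor v y then S' else insert y (S'.erase x))
  · intro S' hS'
    rw [Finset.mem_coe, Finset.mem_filter] at hS'
    obtain ⟨hmem, htr⟩ := hS'
    obtain ⟨h1, h2⟩ := main1 S' htr
    rw [Finset.mem_coe, Finset.mem_filter]
    refine ⟨Finset.mem_powersetCard.mpr ⟨Finset.subset_univ _, ?_⟩, h1⟩
    rw [h2]
    exact (Finset.mem_powersetCard.mp hmem).2
  · intro S₁ h1 S₂ h2 heq
    have ht1 := (Finset.mem_filter.mp h1).2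
    have ht2 := (Finset.mem_filter.mp h2).2
    exact main2 S₁ S₂ ht1 ht2 heq
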